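/- Let (X,d) be a metric space, ε ∈ (0,1), r, g ∈ X, n ∈ ℕ, and f : X → ℝ satisfying (1−ε)·d(v,g) ≤ f(v) ≤ d(v,g) for all v ∈ X (multiplicatively ε-accurate and admissible). Let T ≤ n, let v_0, v_1, …, v_T ∈ X be pairwise distinct with v_0 = r and v_T = g, and let w_1, …, w_T ∈ X and step costs c_1, …, c_T ∈ ℝ satisfy, for every i ∈ {1,…,T}: (a) d(v_{i−1}, g) = d(v_{i−1}, w_i) + d(w_i, g); (b) c_i ≥ d(v_{i−1}, v_i); (c) f(v_i) + c_i ≤ f(w_i) + d(v_{i−1}, w_i); and (d) d(v_i, r) ≤ f(r)/(1−ε). Then Σ_{i=1}^T c_i ≤ (1 + 2nε/(1−ε))·d(r,g). -/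

import Mathlib

open Fin.NatCast in
/-- Trajectory form of Theorem 2 (exploration with known relative error, admissible case):
`ALG ≤ (1 + 2nε/(1-ε)) · OPT`. -/
theorem relative_error_known_eps_admissible
    {X : Type*} [MetricSpace X] (ε : ℝ) (hε0 : 0 < ε) (hε1 : ε < 1)
    (r g : X) (n : ℕ) (f : X → ℝ)
    (hf : ∀ v : X, (1 - ε) * dist v g ≤ f v ∧ f v ≤ dist v g)
    (T : ℕ) (hT : T ≤ n) (v : Fin (T + 1) → X) (hv : Function.Injective v)
    (hv0 : v 0 = r) (hvT : v (Fin.last T) = g)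
    (w : Fin T → X) (c : Fin T → ℝ)
    (ha : ∀ i : Fin T, dist (v i.castSucc) g = dist (v i.castSucc) (w i) + dist (w i) g)
    (hb : ∀ i : Fin T, dist (v i.castSucc) (v i.succ) ≤ c i)
    (hc : ∀ i : Fin T, f (v i.succ) + c i ≤ f (w i) + dist (v i.castSucc) (w i))
    (hd : ∀ i : Fin T, dist (v i.succ) r ≤ f r / (1 - ε)) :
    ∑ i, c i ≤ (1 + 2 * n * ε / (1 - ε)) * dist r g := by
  have h1ε : (0:ℝ) < 1 - ε := by linarith
  set B : ℝ := 2 * dist r g / (1 - ε) with hB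
  have hdist : ∀ i : Fin T, dist (v i.succ) g ≤ B := by
    intro i
    rw [hB, le_div_iff₀ h1ε]
    have h1 : dist (v i.succ) g ≤ dist (v i.succ) r + dist r g := dist_triangle _ _ _
    have h2 : dist (v i.succ) r ≤ f r / (1 - ε) := hd i
    have h2' : dist (v i.succ) r * (1 - ε) ≤ f r := by
      rw [← le_div_iff₀ h1ε]; exact h2
    have h3 : f r ≤ dist r g := (hf r).2
    have hdr : 0 ≤ dist r g := dist_nonneg
    nlinarith [dist_nonneg (x := v i.succ) (y := g)]
  -- per-step bound
  have hstep : ∀ i : Fin T,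
      c i ≤ dist (v i.castSucc) g - dist (v i.succ) g + ε * B := by
    intro i
    have h1 := hc i
    have h2 : f (w i) ≤ dist (w i) g := (hf (w i)).2
    have h3 : (1 - ε) * dist (v i.succ) g ≤ f (v i.succ) := (hf (v i.succ)).1
    have h4 := ha i
    have h5 := hdist i
    nlinarith [hε0.le]
  -- cast lemmas
  have hcast : ∀ i : Fin T, ((i : ℕ) : Fin (T + 1)) = i.castSucc := by
    intro i
    apply Fin.ext
    simp [Fin.val_cast_of_lt (Nat.lt_succ_of_lt i.isLt)]
  have hsucc : ∀ i : Fin T, (((i : ℕ) + 1 : ℕ) : Fin (T + 1)) = i.succ := by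
    intro i
    apply Fin.ext
    simp [Fin.val_cast_of_lt (Nat.succ_lt_succ i.isLt)]
  set E : ℕ → ℝ := fun k => dist (v k) g with hE
  have hsum : ∑ i, c i ≤ ∑ i : Fin T, (E i - E ((i : ℕ) + 1) + ε * B) := by
    apply Finset.sum_le_sum
    intro i _
    have := hstep i
    simpa [hE, hcast i, hsucc i] using this
  have htel : ∑ i : Fin T, (E i - E ((i : ℕ) + 1) + ε * B)
      = (E 0 - E T) + T * (ε * B) := by
    rw [Finset.sum_add_distrib, Finset.sum_const, Finset.card_univ, Fintype.card_fin,
      nsmul_eq_mul]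
    congr 1
    rw [Fin.sum_univ_eq_sum_range (fun k => E k - E (k + 1))]
    exact Finset.sum_range_sub' E T
  have hE0 : E 0 = dist r g := by simp [hE, hv0]
  have hET : E T = 0 := by
    have : ((T : ℕ) : Fin (T + 1)) = Fin.last T := by
      apply Fin.ext
      simp [Fin.val_cast_of_lt (Nat.lt_succ_self T)]
    simp [hE, this, hvT]
  have hdr : 0 ≤ dist r g := dist_nonneg
  have hTB : (T : ℝ) * (ε * B) ≤ 2 * n * ε / (1 - ε) * dist r g := by
    rw [hB]
    have hTn : (T : ℝ) ≤ (n : ℝ) := by exact_mod_cast hT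
    rw [show (T:ℝ) * (ε * (2 * dist r g / (1 - ε)))
        = (T * (ε * (2 * dist r g))) / (1 - ε) by ring,
      show 2 * (n:ℝ) * ε / (1 - ε) * dist r g
        = (2 * n * ε * dist r g) / (1 - ε) by ring,
      div_le_div_iff₀ h1ε h1ε]
    nlinarith [mul_le_mul_of_nonneg_right hTn (by positivity : (0:ℝ) ≤ ε * (2 * dist r g) * (1 - ε))]
  calc ∑ i, c i ≤ (E 0 - E T) + T * (ε * B) := by rw [← htel]; exact hsum
    _ ≤ dist r g + 2 * n * ε / (1 - ε) * dist r g := by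
        rw [hE0, hET]; linarith
    _ = (1 + 2 * n * ε / (1 - ε)) * dist r g := by ring
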